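/- In a tree with a nonempty set I of marked nodes, if u and w are two adjacent vertices both achieving the minimum infection eccentricity λ, and a is any other vertex with d(a,u) = β (where u is the closer of the two centers to a), then the infection eccentricity of a equals λ + β. -/

import Mathlib

open SimpleGraph

section aux

variable {V : Type*} {G : SimpleGraph V}

lemma aux_split [DecidableEq V] (hc : G.Connected) {a x v : V}
    (p : G.Walk a x) (hp : p.length = G.dist a x) (hv : v ∈ p.support) :
    G.dist a x = G.dist a v + G.dist v x := by
  refine le_antisymm hc.dist_triangle ?_
  have h1 : G.dist a v ≤ (p.takeUntil v hv).length := SimpleGraph.dist_le _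
  have h2 : G.dist v x ≤ (p.dropUntil v hv).length := SimpleGraph.dist_le _
  have h3 : (p.takeUntil v hv).length + (p.dropUntil v hv).length = p.length := by
    have h4 := congrArg SimpleGraph.Walk.length (p.take_spec hv)
    rwa [SimpleGraph.Walk.length_append] at h4
  omega

lemma aux_step {u w y x : V} (hadj : G.Adj u w) (h : G.Adj y x)
    (hy : (G.deleteEdges {s(u,w)}).Reachable u y ∨ (G.deleteEdges {s(u,w)}).Reachable w y) :
    (G.deleteEdges {s(u,w)}).Reachable u x ∨ (G.deleteEdges {s(u,w)}).Reachable w x := by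
  by_cases he : s(y, x) = s(u, w)
  · rw [Sym2.eq_iff] at he
    rcases he with ⟨rfl, rfl⟩ | ⟨rfl, rfl⟩
    · exact Or.inr (Reachable.refl _)
    · exact Or.inl (Reachable.refl _)
  · have hadj' : (G.deleteEdges {s(u,w)}).Adj y x := by
      rw [SimpleGraph.deleteEdges_adj]
      exact ⟨h, by simpa using he⟩
    exact hy.imp (fun hr => hr.trans hadj'.reachable) (fun hr => hr.trans hadj'.reachable)

lemma aux_dich (hc : G.Connected) {u w : V} (hadj : G.Adj u w) (x : V) :
    (G.deleteEdges {s(u,w)}).Reachable u x ∨ (G.deleteEdges {s(u,w)}).Reachable w x := by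
  obtain ⟨p⟩ := hc u x
  have key : ∀ {y z : V} (p : G.Walk y z),
      ((G.deleteEdges {s(u,w)}).Reachable u y ∨ (G.deleteEdges {s(u,w)}).Reachable w y) →
      ((G.deleteEdges {s(u,w)}).Reachable u z ∨ (G.deleteEdges {s(u,w)}).Reachable w z) := by
    intro y z p
    induction p with
    | nil => exact id
    | cons h q ih => exact fun hy => ih (aux_step hadj h hy)
  exact key p (Or.inl (Reachable.refl _))

lemma aux_bridge (hG : G.IsTree) {u w : V} (hadj : G.Adj u w) :
    ¬ (G.deleteEdges {s(u,w)}).Reachable u w := by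
  have hb : G.IsBridge s(u, w) :=
    (SimpleGraph.isAcyclic_iff_forall_adj_isBridge.mp hG.IsAcyclic) hadj
  exact SimpleGraph.isBridge_iff.mp hb

/-- if x is on w's side after deleting the bridge uw then d(u,x) = 1 + d(w,x) -/
lemma aux_key [DecidableEq V] (hG : G.IsTree) {u w x : V} (hadj : G.Adj u w)
    (hx : (G.deleteEdges {s(u,w)}).Reachable w x) :
    G.dist u x = G.dist w x + 1 := by
  have hc := hG.isConnected
  obtain ⟨p, hp⟩ := (hc u x).exists_walk_length_eq_dist
  have hedge : s(u, w) ∈ p.edges := by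
    by_contra hne
    have : (G.deleteEdges {s(u,w)}).Reachable u x :=
      ⟨p.toDeleteEdges {s(u,w)} (by intro e he; simp; rintro rfl; exact hne he)⟩
    exact aux_bridge hG hadj (this.trans hx.symm)
  have hmem : w ∈ p.support := p.snd_mem_support_of_mem_edges hedge
  have hsplit := aux_split hc p hp hmem
  have h1 : G.dist u w = 1 := SimpleGraph.dist_eq_one_iff_adj.mpr hadj
  omega

end aux

/-- In a finite tree with nonempty infected set `I`, if adjacent vertices `u, w` both
achieve the minimum infection eccentricity `λ`, and `a ∉ {u,w}` lies in the component of
`G − w` containing `u` (encoded by `d(a,w) = d(a,u) + 1`) with `d(a,u) = β`, then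
`ẽ(a) = λ + β`. -/
theorem stmt_2 {V : Type*} [Fintype V] [DecidableEq V] [Nonempty V]
    (G : SimpleGraph V) (hG : G.IsTree)
    (I : Finset V) (hI : I.Nonempty)
    (e : V → ℕ) (he : ∀ v, e v = I.sup' hI (fun x => G.dist v x))
    (u w : V) (hadj : G.Adj u w) (lam : ℕ)
    (hu : e u = lam) (hw : e w = lam)
    (hmin : lam = Finset.univ.inf' Finset.univ_nonempty e)
    (a : V) (hau : a ≠ u) (haw : a ≠ w)
    (β : ℕ) (hdist : G.dist a u = β)
    (hside : G.dist a w = G.dist a u + 1) :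
    e a = lam + β := by
  have hc := hG.isConnected
  have hdu : ∀ x ∈ I, G.dist u x ≤ lam := by
    intro x hx
    rw [he u] at hu
    exact hu ▸ Finset.le_sup' (fun x => G.dist u x) hx
  have hdw : ∀ x ∈ I, G.dist w x ≤ lam := by
    intro x hx
    rw [he w] at hw
    exact hw ▸ Finset.le_sup' (fun x => G.dist w x) hx
  -- upper bound
  have hub : e a ≤ lam + β := by
    rw [he a]
    refine Finset.sup'_le _ _ fun x hx => ?_
    calc G.dist a x ≤ G.dist a u + G.dist u x := hc.dist_triangle
      _ ≤ β + lam := by have := hdu x hx; omega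
      _ = lam + β := by omega
  -- a is on u's side
  have hasideu : (G.deleteEdges {s(u,w)}).Reachable u a := by
    rcases aux_dich hc hadj a with h | h
    · exact h
    · exfalso
      have hk := aux_key hG hadj h
      have e1 : G.dist w a = G.dist a w := SimpleGraph.dist_comm
      have e2 : G.dist u a = G.dist a u := SimpleGraph.dist_comm
      omega
  -- pick x1 with d(u,x1) = lam
  obtain ⟨x1, hx1I, hx1⟩ := Finset.exists_mem_eq_sup' hI (fun x => G.dist u x)
  rw [← he u, hu] at hx1
  -- x1 is on w's side
  have hx1side : (G.deleteEdges {s(u,w)}).Reachable w x1 := by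
    rcases aux_dich hc hadj x1 with h | h
    · exfalso
      have hk := aux_key hG hadj.symm (x := x1)
        (by rwa [show s(w,u) = s(u,w) from Sym2.eq_swap])
      have := hdw x1 hx1I
      omega
    · exact h
  -- lower bound: d(a,x1) = d(a,u) + d(u,x1) = β + lam
  have hlow : G.dist a x1 = lam + β := by
    obtain ⟨p, hp⟩ := (hc a x1).exists_walk_length_eq_dist
    have hedge : s(u, w) ∈ p.edges := by
      by_contra hne
      have hax : (G.deleteEdges {s(u,w)}).Reachable a x1 :=
        ⟨p.toDeleteEdges {s(u,w)} (by intro e' he'; simp; rintro rfl; exact hne he')⟩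
      exact aux_bridge hG hadj ((hasideu.trans hax).trans hx1side.symm)
    have hmem : u ∈ p.support := p.fst_mem_support_of_mem_edges hedge
    have hsplit := aux_split hc p hp hmem
    omega
  have hlb : lam + β ≤ e a := by
    rw [he a]
    exact hlow ▸ Finset.le_sup' (fun x => G.dist a x) hx1I
  omega
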